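/- Suppose A = (1,2,2). Let c be an admissible coefficient function satisfying (Cubic values), (Normalization) and (Symmetry). Then c(2e_{2,1}+2e_{3,1},0) = 0 and c(3e_{2,1}+e_{3,1},0) = c(3e_{3,1}+e_{2,1},0) = 0. -/

import Mathlib

/- Common framework: Frobenius manifolds for orbifold projective lines ℙ¹_A,
   following Ishibashi–Shiraishi–Takahashi. -/

namespace FrobeniusUniqueness

/-- A point index `(i, j)` labelling a flat coordinate `t_{i,j}`. -/
abbrev Pt : Type := Fin 3 × ℕ

/-- A non-negative element of `ℤ^{μ_A − 2}`: an exponent vector `α` with `α_{i,j} ∈ ℕ`. -/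
abbrev Expv : Type := Pt →₀ ℕ

/-- The standard basis vector `e_{i,j}`. -/
noncomputable def e (i : Fin 3) (j : ℕ) : Expv := Finsupp.single (i, j) 1

/-- The length `|α|` of an exponent vector. -/
def len (α : Expv) : ℕ := α.sum fun _ n => n

/-- A point index `(i,j)` is valid if `1 ≤ j ≤ a_i − 1`. -/
def ValidPt (A : Fin 3 → ℕ) (p : Pt) : Prop := 1 ≤ p.2 ∧ p.2 ≤ A p.1 - 1

/-- An exponent vector lies in `ℤ^{μ_A − 2}` iff it is supported on valid indices. -/
def Valid (A : Fin 3 → ℕ) (α : Expv) : Prop := ∀ p ∈ α.support, ValidPt A p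

/-- The combinatorial factor `s_{a,b,c}`. -/
def sFactor (a b c : ℕ) : ℂ :=
  if a = b ∧ b = c then 6
  else if a ≠ b ∧ b ≠ c ∧ a ≠ c then 1
  else 2

/-- The index type for the flat coordinates `t_1`, `t_{i,j}`, `t_{μ_A}`. -/
inductive Idx : Type where
  | one : Idx
  | pt : Fin 3 → ℕ → Idx
  | mu : Idx
deriving DecidableEq

/-- Validity of a flat coordinate index. -/
def ValidIdx (A : Fin 3 → ℕ) : Idx → Prop
  | .one => True
  | .pt i j => ValidPt A (i, j)
  | .mu => True

/-- The metric `η` in the frame `∂_1, ∂_{i,j}, ∂_{μ_A}`. -/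
noncomputable def eta (A : Fin 3 → ℕ) : Idx → Idx → ℂ
  | .one, .mu => 1
  | .mu, .one => 1
  | .pt i j, .pt i' j' =>
      if i = i' ∧ j + j' = A i ∧ 1 ≤ j ∧ j ≤ A i - 1 then (A i : ℂ)⁻¹ else 0
  | _, _ => 0

/-- The point indices occurring in an `Idx`. -/
def ptsOf : Idx → List Pt
  | .pt i j => [(i, j)]
  | _ => []

/-- The number of occurrences of `μ_A` in an `Idx`. -/
def muCount : Idx → ℕ
  | .mu => 1
  | _ => 0

/-- The factor produced when the monomial `t^{β + Σ_{p ∈ ps} e_p}` is differentiated by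
`∏_{p ∈ ps} ∂_p`, leaving the monomial `t^β`. -/
noncomputable def dfac (β : Expv) : List Pt → ℕ
  | [] => 1
  | p :: ps =>
      ((β + ((ps.map fun q => (Finsupp.single q 1 : Expv)).sum) + Finsupp.single p 1 : Expv) p)
        * dfac β ps

/-- `der A c a b d β m` is the coefficient of `t^β · e^{m·t_{μ_A}}` in `∂_a ∂_b ∂_d F`, where
`F = (1/2)t_1²t_{μ_A} + (1/2)t_1·Σ_{i,j}(1/a_i)t_{i,j}t_{i,a_i−j} + Σ_{α,m} c(α,m)t^α e^{m t_{μ_A}}`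
is the potential of the coefficient function `c`.  In particular `∂_1∂_a∂_b F = η(∂_a,∂_b)`. -/
noncomputable def der (A : Fin 3 → ℕ) (c : Expv → ℕ → ℂ) (a b d : Idx) (β : Expv) (m : ℕ) : ℂ :=
  if a = .one then (if β = 0 ∧ m = 0 then eta A b d else 0)
  else if b = .one then (if β = 0 ∧ m = 0 then eta A a d else 0)
  else if d = .one then (if β = 0 ∧ m = 0 then eta A a b else 0)
  else
    (m : ℂ) ^ (muCount a + muCount b + muCount d) *
      (dfac β (ptsOf a ++ ptsOf b ++ ptsOf d) : ℂ) *
      c (β + (((ptsOf a ++ ptsOf b ++ ptsOf d).map fun q => (Finsupp.single q 1 : Expv)).sum)) m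

/-- The coefficient of `t^β · e^{m·t_{μ_A}}` in
`Σ_{σ,τ} ∂_a∂_b∂_σF · η^{στ} · ∂_τ∂_d∂_e F`, where `(η^{στ})` is the inverse matrix of
`(η_{στ})` (so the only nonzero entries are `η^{1,μ_A} = η^{μ_A,1} = 1` and
`η^{(i,j),(i,a_i−j)} = a_i`). -/
noncomputable def quadTerm (A : Fin 3 → ℕ) (c : Expv → ℕ → ℂ) (a b d e' : Idx)
    (β : Expv) (m : ℕ) : ℂ :=
  ∑ x ∈ Finset.HasAntidiagonal.antidiagonal β, ∑ y ∈ Finset.HasAntidiagonal.antidiagonal m,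
    (der A c a b .one x.1 y.1 * der A c .mu d e' x.2 y.2
     + der A c a b .mu x.1 y.1 * der A c .one d e' x.2 y.2
     + ∑ i : Fin 3, ∑ j ∈ Finset.Icc 1 (A i - 1),
         (A i : ℂ) * der A c a b (.pt i j) x.1 y.1 * der A c (.pt i (A i - j)) d e' x.2 y.2)

/-- `χ_A = 1/a_1 + 1/a_2 + 1/a_3 − 1`. -/
noncomputable def chi (A : Fin 3 → ℕ) : ℚ := (A 0 : ℚ)⁻¹ + (A 1 : ℚ)⁻¹ + (A 2 : ℚ)⁻¹ - 1

/-- The degree of the monomial `t^α`: `Σ_{i,j} α_{i,j}·(a_i − j)/a_i`. -/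
noncomputable def deg (A : Fin 3 → ℕ) (α : Expv) : ℚ :=
  α.sum fun p n => (n : ℚ) * (((A p.1 : ℚ) - (p.2 : ℚ)) / (A p.1 : ℚ))

/-- A coefficient function is admissible if it satisfies (Homogeneity) and the WDVV
equations (coefficientwise, in the variables `t_{i,j}` and `e^{t_{μ_A}}`). -/
structure IsAdmissible (A : Fin 3 → ℕ) (c : Expv → ℕ → ℂ) : Prop where
  homog : ∀ α : Expv, Valid A α → ∀ m : ℕ, c α m ≠ 0 → deg A α + (m : ℚ) * chi A = 2
  wdvv : ∀ a b d e' : Idx, ValidIdx A a → ValidIdx A b → ValidIdx A d → ValidIdx A e' →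
      ∀ β : Expv, Valid A β → ∀ m : ℕ,
        quadTerm A c a b d e' β m = quadTerm A c a d b e' β m

/-- (Cubic values). -/
def CubicValues (A : Fin 3 → ℕ) (c : Expv → ℕ → ℂ) : Prop :=
  (∀ (i₁ i₂ i₃ : Fin 3) (j₁ j₂ j₃ : ℕ),
      ValidPt A (i₁, j₁) → ValidPt A (i₂, j₂) → ValidPt A (i₃, j₃) →
      ¬(i₁ = i₂ ∧ i₂ = i₃) → c (e i₁ j₁ + e i₂ j₂ + e i₃ j₃) 0 = 0) ∧
  (∀ (i : Fin 3) (j₁ j₂ j₃ : ℕ),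
      ValidPt A (i, j₁) → ValidPt A (i, j₂) → ValidPt A (i, j₃) →
      sFactor j₁ j₂ j₃ * c (e i j₁ + e i j₂ + e i j₃) 0 =
        if j₁ + j₂ + j₃ = A i then (A i : ℂ)⁻¹ else 0)

/-- (Normalization). -/
def Normalization (A : Fin 3 → ℕ) (c : Expv → ℕ → ℂ) : Prop :=
  (2 ≤ A 0 → c (e 0 1 + e 1 1 + e 2 1) 1 = 1) ∧
  (A 0 = 1 → A 0 < A 1 → c (e 1 1 + e 2 1) 1 = 1) ∧
  (A 0 = 1 → A 1 = 1 → A 1 < A 2 → c (e 2 1) 1 = 1) ∧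
  (A 0 = 1 → A 1 = 1 → A 2 = 1 → c 0 1 = 1)

/-- (Separation). -/
def Separation (A : Fin 3 → ℕ) (c : Expv → ℕ → ℂ) : Prop :=
  ∀ γ : Expv, Valid A γ →
    ∀ (i₁ i₂ : Fin 3) (j₁ j₂ : ℕ), i₁ ≠ i₂ → ValidPt A (i₁, j₁) → ValidPt A (i₂, j₂) →
      e i₁ j₁ + e i₂ j₂ ≤ γ → c γ 0 = 0

/-- The automorphism of `ℤ^{μ_A−2}` exchanging `e_{i₁,j}` and `e_{i₂,j}` for all `j`. -/
def swapExp (i₁ i₂ : Fin 3) (α : Expv) : Expv :=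
  Finsupp.equivMapDomain ((Equiv.swap i₁ i₂).prodCongr (Equiv.refl ℕ)) α

/-- (Symmetry). -/
def Symmetry (A : Fin 3 → ℕ) (c : Expv → ℕ → ℂ) : Prop :=
  ∀ i₁ i₂ : Fin 3, A i₁ = A i₂ → ∀ α : Expv, Valid A α → ∀ m : ℕ,
    c (swapExp i₁ i₂ α) m = c α m


set_option maxHeartbeats 4000000 in
/-- Sub-Lemma (Step 4): the case A = (1,2,2). -/
theorem case_122_degree_zero (A : Fin 3 → ℕ) (hA : ∀ i, 1 ≤ A i) (hA01 : A 0 ≤ A 1) (hA12 : A 1 ≤ A 2)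
    (hA0 : A 0 = 1) (hA1 : A 1 = 2) (hA2 : A 2 = 2)
    (c : Expv → ℕ → ℂ) (hadm : IsAdmissible A c) (hcub : CubicValues A c)
    (hnorm : Normalization A c) (hsym : Symmetry A c) :
    c (2 • e 1 1 + 2 • e 2 1) 0 = 0 ∧
    c (3 • e 1 1 + e 2 1) 0 = 0 ∧ c (3 • e 2 1 + e 1 1) 0 = 0 := by
  set X : Pt := ((1:Fin 3),(1:ℕ)) with hX
  set Y : Pt := ((2:Fin 3),(1:ℕ)) with hY
  have hval : ∀ n₁ n₂ : ℕ, Valid A (Finsupp.single X n₁ + Finsupp.single Y n₂) := by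
    intro n₁ n₂ p hp
    have h := Finsupp.support_add hp
    simp only [Finset.mem_union] at h
    rcases h with h | h <;> have h2 := Finsupp.support_single_subset h <;>
      simp only [Finset.mem_singleton] at h2 <;> subst h2 <;>
      constructor <;> simp [ValidPt, hX, hY, hA1, hA2]
  have hdeg : ∀ n₁ n₂ : ℕ, deg A (Finsupp.single X n₁ + Finsupp.single Y n₂)
      = (n₁ : ℚ)/2 + (n₂ : ℚ)/2 := by
    intro n₁ n₂
    rw [deg, Finsupp.sum_add_index (by simp) (by intros; push_cast; ring),
      Finsupp.sum_single_index (by simp), Finsupp.sum_single_index (by simp)]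
    simp [hX, hY, hA1, hA2]
    try ring
  have hchi : chi A = 1 := by simp [chi, hA0, hA1, hA2]; norm_num
  have hK2 : ∀ n₁ n₂ m : ℕ, n₁ + n₂ + 2*m ≠ 4 →
      c (Finsupp.single X n₁ + Finsupp.single Y n₂) m = 0 := by
    intro n₁ n₂ m hne
    by_contra h
    have h2 := hadm.homog _ (hval n₁ n₂) m h
    rw [hdeg, hchi] at h2
    apply hne
    have : (n₁ + n₂ + 2*m : ℚ) = 4 := by push_cast at h2 ⊢; linarith
    exact_mod_cast this
  have hKX : ∀ n m : ℕ, n + 2*m ≠ 4 → c (Finsupp.single X n) m = 0 := by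
    intro n m hne
    have := hK2 n 0 m (by omega)
    simpa using this
  have hKY : ∀ n m : ℕ, n + 2*m ≠ 4 → c (Finsupp.single Y n) m = 0 := by
    intro n m hne
    have := hK2 0 n m (by omega)
    simpa using this
  have hsw : ∀ n₁ n₂ m : ℕ,
      c (Finsupp.single Y n₁ + Finsupp.single X n₂) m
        = c (Finsupp.single X n₁ + Finsupp.single Y n₂) m := by
    intro n₁ n₂ m
    have h := hsym 1 2 (by rw [hA1, hA2]) _ (hval n₁ n₂) m
    rw [← h]
    congr 1
    show _ = Finsupp.domCongr (α := Pt) (β := Pt) (M := ℕ) _ _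
    rw [map_add]
    show _ = Finsupp.equivMapDomain _ _ + Finsupp.equivMapDomain _ _
    rw [Finsupp.equivMapDomain_single, Finsupp.equivMapDomain_single]
    simp [Prod.map, Equiv.swap_apply_left, Equiv.swap_apply_right, hX, hY, add_comm, ← Prod.one_eq_mk]
  have hswY : ∀ n m : ℕ, c (Finsupp.single Y n) m = c (Finsupp.single X n) m := by
    intro n m
    have hv : Valid A (Finsupp.single Y n) := by
      intro p hp; have := hval 0 n p (by simpa using hp); exact this
    have h := hsym 1 2 (by rw [hA1, hA2]) _ hv m
    rw [← h, swapExp, Finsupp.equivMapDomain_single]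
    congr 1
    all_goals simp [Prod.map, Equiv.swap_apply_right, hX, hY, ← Prod.one_eq_mk]
  have hXYne : X ≠ Y := by rw [hX, hY]; decide
  have hYXne : Y ≠ X := by rw [hX, hY]; decide
  have hmerge : ∀ (p : Pt) (a b : ℕ) (γ : Expv),
      Finsupp.single p a + (Finsupp.single p b + γ) = Finsupp.single p (a+b) + γ := by
    intro p a b γ; rw [← add_assoc, ← Finsupp.single_add]
  have hvalpt : ∀ i : Fin 3, 2 ≤ A i → ValidIdx A (.pt i 1) := by
    intro i h
    refine ⟨le_refl 1, ?_⟩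
    show 1 ≤ A i - 1
    omega
  have hval0 : Valid A (0 : Expv) := by intro p hp; simp at hp
  -- W1
  have W1 := hadm.wdvv (.pt 1 1) (.pt 1 1) (.pt 2 1) (.pt 2 1)
    (hvalpt 1 hA1.ge) (hvalpt 1 hA1.ge) (hvalpt 2 hA2.ge) (hvalpt 2 hA2.ge)
    0 hval0 1
  rw [quadTerm, quadTerm] at W1
  simp only [Finsupp.antidiagonal_zero,
    show (Finset.HasAntidiagonal.antidiagonal (1:ℕ)) = {(0,1),(1,0)} from by decide,
    Fin.sum_univ_three, hA0, hA1, hA2, show (1:ℕ)-1 = 0 from rfl, show (2:ℕ)-1 = 1 from rfl,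
    show Finset.Icc 1 0 = (∅ : Finset ℕ) from by decide,
    show Finset.Icc 1 1 = ({1} : Finset ℕ) from by decide,
    Finset.sum_singleton, Finset.sum_empty,
    Finset.sum_pair (by decide : ((0:ℕ),(1:ℕ)) ≠ (1,0))] at W1
  simp [der, dfac, ptsOf, muCount, eta, hA1, hA2, Finsupp.single_apply, ← Finsupp.single_add,
    hmerge, add_comm, add_assoc, add_left_comm, ← hX, ← hY,
    hXYne, hYXne, hK2, hKX, hKY] at W1
  rw [hswY] at W1
  have hp : c (Finsupp.single X 2) 1 = 0 := by linear_combination W1 / 2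
  have hpY : c (Finsupp.single Y 2) 1 = 0 := by rw [hswY]; exact hp
  have hN : c (Finsupp.single X 1 + Finsupp.single Y 1) 1 = 1 := by
    have := hnorm.2.1 hA0 (by omega)
    simpa [e, ← hX, ← hY] using this
  have hvalX2 : Valid A (Finsupp.single X 2) := by
    intro p hp2; exact hval 2 0 p (by simpa using hp2)
  -- W2
  have W2 := hadm.wdvv (.pt 1 1) (.pt 1 1) .mu .mu
    (hvalpt 1 hA1.ge) (hvalpt 1 hA1.ge) trivial trivial
    (Finsupp.single X 2) hvalX2 1
  rw [quadTerm, quadTerm] at W2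
  simp only [Finsupp.antidiagonal_single, Finset.sum_map,
    show (Finset.HasAntidiagonal.antidiagonal (1:ℕ)) = {(0,1),(1,0)} from by decide,
    show (Finset.HasAntidiagonal.antidiagonal (2:ℕ)) = {(0,2),(1,1),(2,0)} from by decide,
    Fin.sum_univ_three, hA0, hA1, hA2, show (1:ℕ)-1 = 0 from rfl, show (2:ℕ)-1 = 1 from rfl,
    show Finset.Icc 1 0 = (∅ : Finset ℕ) from by decide,
    show Finset.Icc 1 1 = ({1} : Finset ℕ) from by decide,
    Finset.sum_singleton, Finset.sum_empty,
    Finset.sum_pair (by decide : ((0:ℕ),(1:ℕ)) ≠ (1,0)),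
    Finset.sum_insert (by decide : ((0:ℕ),(2:ℕ)) ∉ ({(1,1),(2,0)} : Finset (ℕ×ℕ))),
    Finset.sum_pair (by decide : ((1:ℕ),(1:ℕ)) ≠ (2,0)),
    Function.Embedding.coe_prodMap, Function.Embedding.coeFn_mk, Prod.map_apply] at W2
  simp [der, dfac, ptsOf, muCount, eta, hA1, hA2, Finsupp.single_apply, ← Finsupp.single_add,
    hmerge, add_comm, add_assoc, add_left_comm, ← hX, ← hY,
    hXYne, hYXne, hK2, hKX, hKY, hp, hpY, hN] at W2
  -- W3
  have W3 := hadm.wdvv (.pt 1 1) (.pt 2 1) .mu .mu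
    (hvalpt 1 hA1.ge) (hvalpt 2 hA2.ge) trivial trivial
    (Finsupp.single X 2) hvalX2 1
  rw [quadTerm, quadTerm] at W3
  simp only [Finsupp.antidiagonal_single, Finset.sum_map,
    show (Finset.HasAntidiagonal.antidiagonal (1:ℕ)) = {(0,1),(1,0)} from by decide,
    show (Finset.HasAntidiagonal.antidiagonal (2:ℕ)) = {(0,2),(1,1),(2,0)} from by decide,
    Fin.sum_univ_three, hA0, hA1, hA2, show (1:ℕ)-1 = 0 from rfl, show (2:ℕ)-1 = 1 from rfl,
    show Finset.Icc 1 0 = (∅ : Finset ℕ) from by decide,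
    show Finset.Icc 1 1 = ({1} : Finset ℕ) from by decide,
    Finset.sum_singleton, Finset.sum_empty,
    Finset.sum_pair (by decide : ((0:ℕ),(1:ℕ)) ≠ (1,0)),
    Finset.sum_insert (by decide : ((0:ℕ),(2:ℕ)) ∉ ({(1,1),(2,0)} : Finset (ℕ×ℕ))),
    Finset.sum_pair (by decide : ((1:ℕ),(1:ℕ)) ≠ (2,0)),
    Function.Embedding.coe_prodMap, Function.Embedding.coeFn_mk, Prod.map_apply] at W3
  simp [der, dfac, ptsOf, muCount, eta, hA1, hA2, Finsupp.single_apply, ← Finsupp.single_add,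
    hmerge, add_comm, add_assoc, add_left_comm, ← hX, ← hY,
    hXYne, hYXne, hK2, hKX, hKY, hp, hpY, hN, W2] at W3
  -- conclude
  refine ⟨?_, ?_, ?_⟩
  · rw [show (2 • e 1 1 + 2 • e 2 1 : Expv) = Finsupp.single X 2 + Finsupp.single Y 2 from by
      rw [hX, hY]; simp [e, Finsupp.smul_single]]
    exact W3
  · rw [show (3 • e 1 1 + e 2 1 : Expv) = Finsupp.single X 3 + Finsupp.single Y 1 from by
      rw [hX, hY]; simp [e, Finsupp.smul_single]]
    exact W2
  · rw [show (3 • e 2 1 + e 1 1 : Expv) = Finsupp.single Y 3 + Finsupp.single X 1 from by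
      rw [hX, hY]; simp [e, Finsupp.smul_single]]
    rw [hsw 3 1 0]
    exact W2

end FrobeniusUniqueness
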